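/- Let e be an element of a connected finite matroid M. Then M∖e or M/e is connected. -/

import Mathlib

noncomputable section
open scoped Matroid

namespace Matroid

variable {α : Type*}

/-- The rank of a set `X` in a (finite) matroid `M`: the largest size of an independent
subset of `X`. -/
def rankOf (M : Matroid α) (X : Set α) : ℕ :=
  sSup {n | ∃ I, M.Indep I ∧ I ⊆ X ∧ I.ncard = n}

/-- `X` is a separator of `M`: `X ⊆ E` and `r(X) + r(E − X) = r(E)`. -/
def IsSep (M : Matroid α) (X : Set α) : Prop :=
  X ⊆ M.E ∧ M.rankOf X + M.rankOf (M.E \ X) = M.rankOf M.E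

/-- `M` is connected: it has no proper separator. -/
def IsConn (M : Matroid α) : Prop :=
  ¬ ∃ X, M.IsSep X ∧ X.Nonempty ∧ X ≠ M.E

/-- The matroid `M∖e` obtained by deleting the element `e`. -/
def delElem (M : Matroid α) (e : α) : Matroid α := M ↾ (M.E \ {e})

/-- The matroid `M/e` obtained by contracting the element `e`, via `M/e = (M✶∖e)✶`. -/
def conElem (M : Matroid α) (e : α) : Matroid α := ((M✶) ↾ (M.E \ {e}))✶

/-- `N` is a minor of `M`: it is obtained from `M` by a sequence of single-element
deletions and contractions. -/
inductive MinorOfElem : Matroid α → Matroid α → Prop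
  | refl (M : Matroid α) : MinorOfElem M M
  | del {N M : Matroid α} (e : α) : MinorOfElem N M → e ∈ N.E → MinorOfElem (N.delElem e) M
  | con {N M : Matroid α} (e : α) : MinorOfElem N M → e ∈ N.E → MinorOfElem (N.conElem e) M

end Matroid

namespace Matroid

open Set

variable {α : Type*} {M : Matroid α} {I J X Y : Set α} {e : α}

lemma rankOf_eq_ncard (hfin : M.E.Finite) (hI : M.IsBasis' I X) :
    M.rankOf X = I.ncard := by
  have hub : ∀ n ∈ {n | ∃ J, M.Indep J ∧ J ⊆ X ∧ J.ncard = n}, n ≤ I.ncard := by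
    rintro n ⟨J, hJ, hJX, rfl⟩
    obtain ⟨I', hI', hJI'⟩ := hJ.subset_isBasis'_of_subset hJX
    have hcard : I'.ncard = I.ncard := by
      rw [Set.ncard_def, hI'.encard_eq_encard hI, ← Set.ncard_def]
    exact (Set.ncard_le_ncard hJI' (hfin.subset hI'.indep.subset_ground)).trans hcard.le
  have hmem : I.ncard ∈ {n | ∃ J, M.Indep J ∧ J ⊆ X ∧ J.ncard = n} :=
    ⟨I, hI.indep, hI.subset, rfl⟩
  exact le_antisymm (csSup_le ⟨_, hmem⟩ hub) (le_csSup ⟨_, hub⟩ hmem)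

lemma ncard_le_rankOf_of_indep (hfin : M.E.Finite) (hJ : M.Indep J) (hJX : J ⊆ X) :
    J.ncard ≤ M.rankOf X := by
  obtain ⟨I, hI, hJI⟩ := hJ.subset_isBasis'_of_subset hJX
  rw [rankOf_eq_ncard hfin hI]
  exact ncard_le_ncard hJI (hfin.subset hI.indep.subset_ground)

lemma rankOf_mono (hfin : M.E.Finite) (hXY : X ⊆ Y) : M.rankOf X ≤ M.rankOf Y := by
  obtain ⟨I, hI⟩ := M.exists_isBasis' X
  rw [rankOf_eq_ncard hfin hI]
  exact ncard_le_rankOf_of_indep hfin hI.indep (hI.subset.trans hXY)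

lemma rankOf_le_ncard (hfin : M.E.Finite) (hX : X.Finite) : M.rankOf X ≤ X.ncard := by
  obtain ⟨I, hI⟩ := M.exists_isBasis' X
  rw [rankOf_eq_ncard hfin hI]
  exact ncard_le_ncard hI.subset hX

lemma rankOf_submod (hfin : M.E.Finite) (X Y : Set α) :
    M.rankOf (X ∪ Y) + M.rankOf (X ∩ Y) ≤ M.rankOf X + M.rankOf Y := by
  obtain ⟨I, hI⟩ := M.exists_isBasis' (X ∩ Y)
  obtain ⟨J, hJ, hIJ⟩ := hI.indep.subset_isBasis'_of_subset
    (hI.subset.trans (inter_subset_left.trans subset_union_left))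
  have hJfin : J.Finite := hfin.subset hJ.indep.subset_ground
  rw [rankOf_eq_ncard hfin hJ, rankOf_eq_ncard hfin hI]
  have h1 : (J ∩ X).ncard ≤ M.rankOf X :=
    ncard_le_rankOf_of_indep hfin (hJ.indep.subset inter_subset_left) inter_subset_right
  have h2 : (J ∩ Y).ncard ≤ M.rankOf Y :=
    ncard_le_rankOf_of_indep hfin (hJ.indep.subset inter_subset_left) inter_subset_right
  have h3 : I.ncard ≤ (J ∩ (X ∩ Y)).ncard :=
    ncard_le_ncard (subset_inter hIJ hI.subset) (hJfin.inter_of_left _)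
  have h4 : (J ∩ X) ∪ (J ∩ Y) = J := by
    rw [← inter_union_distrib_left, inter_eq_self_of_subset_left hJ.subset]
  have h5 : (J ∩ X) ∩ (J ∩ Y) = J ∩ (X ∩ Y) := by
    rw [← inter_inter_distrib_left]
  have h6 := ncard_union_add_ncard_inter (J ∩ X) (J ∩ Y)
    (hJfin.inter_of_left _) (hJfin.inter_of_left _)
  rw [h4, h5] at h6
  omega

lemma rankOf_restrict (M : Matroid α) (R X : Set α) :
    (M ↾ R).rankOf X = M.rankOf (X ∩ R) := by
  unfold rankOf
  congr 1
  ext n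
  simp only [Set.mem_setOf_eq, restrict_indep_iff, Set.subset_inter_iff]
  tauto

lemma rankOf_dual_add (hfin : M.E.Finite) (hX : X ⊆ M.E) :
    M✶.rankOf X + M.rankOf M.E = X.ncard + M.rankOf (M.E \ X) := by
  obtain ⟨I, hI⟩ := M.exists_isBasis (M.E \ X) diff_subset
  obtain ⟨B, hB, hIB⟩ := hI.indep.exists_isBase_superset
  have hBE := hB.subset_ground
  have hBfin : B.Finite := hfin.subset hBE
  have hIBX : I ⊆ B \ X := subset_diff.mpr ⟨hIB,
    disjoint_sdiff_left.mono_left hI.subset⟩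
  have hI_eq : I = B \ X :=
    hI.eq_of_subset_indep (hB.indep.subset diff_subset) hIBX (diff_subset_diff_left hBE)
  -- `X \ B` is a basis of `X` in the dual
  have hdualind : M✶.Indep (X \ B) :=
    dual_indep_iff_exists'.mpr ⟨diff_subset.trans hX, B, hB, disjoint_sdiff_left⟩
  have hdual : M✶.IsBasis (X \ B) X := by
    refine hdualind.isBasis_of_maximal_subset diff_subset ?_ (by rwa [dual_ground])
    intro K hK hXBK hKX
    intro x hxK
    refine ⟨hKX hxK, fun hxB => ?_⟩
    obtain ⟨-, B', hB', hdisj⟩ := dual_indep_iff_exists'.mp hK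
    have hB'fin : B'.Finite := hfin.subset hB'.subset_ground
    have hB'X : B' ∩ X ⊆ (B ∩ X) \ {x} := by
      intro y ⟨hyB', hyX⟩
      have hyK : y ∉ K := fun h => hdisj.ne_of_mem h hyB' rfl
      have hyB : y ∈ B := by
        by_contra hyB
        exact hyK (hXBK ⟨hyX, hyB⟩)
      exact ⟨⟨hyB, hyX⟩, fun h => hyK (h ▸ hxK)⟩
    have hlt : (B' ∩ X).ncard < (B ∩ X).ncard :=
      lt_of_le_of_lt (ncard_le_ncard hB'X ((hBfin.inter_of_left _).diff))
        (ncard_diff_singleton_lt_of_mem ⟨hxB, hKX hxK⟩ (hBfin.inter_of_left _))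
    have hle2 : (B' \ X).ncard ≤ (B \ X).ncard := by
      have h := ncard_le_rankOf_of_indep (M := M) (J := B' \ X) (X := M.E \ X) hfin
        (hB'.indep.subset diff_subset) (diff_subset_diff_left hB'.subset_ground)
      rwa [rankOf_eq_ncard hfin hI.isBasis', hI_eq] at h
    have e1 := ncard_inter_add_ncard_diff_eq_ncard B' X hB'fin
    have e2 := ncard_inter_add_ncard_diff_eq_ncard B X hBfin
    have := hB'.ncard_eq_ncard_of_isBase hB
    omega
  rw [rankOf_eq_ncard hfin hI.isBasis', rankOf_eq_ncard hfin hB.isBasis_ground.isBasis',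
    rankOf_eq_ncard (by rwa [dual_ground]) hdual.isBasis', hI_eq]
  have hXfin : X.Finite := hfin.subset hX
  have e1 := ncard_inter_add_ncard_diff_eq_ncard B X hBfin
  have e2 := ncard_inter_add_ncard_diff_eq_ncard X B hXfin
  rw [inter_comm X B] at e2
  omega

lemma delElem_ground (M : Matroid α) (e : α) : (M.delElem e).E = M.E \ {e} := rfl

lemma conElem_ground (M : Matroid α) (e : α) : (M.conElem e).E = M.E \ {e} := rfl

lemma delElem_rankOf (hX : X ⊆ M.E \ {e}) :
    (M.delElem e).rankOf X = M.rankOf X := by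
  rw [delElem, rankOf_restrict, inter_eq_self_of_subset_left hX]

lemma conElem_rankOf (hfin : M.E.Finite) (he : e ∈ M.E) (he1 : M.rankOf {e} = 1)
    (hX : X ⊆ M.E \ {e}) :
    (M.conElem e).rankOf X + 1 = M.rankOf (X ∪ {e}) := by
  have hE'fin : (M.E \ {e}).Finite := hfin.subset diff_subset
  have h1 := rankOf_dual_add (M := M✶ ↾ (M.E \ {e})) (X := X)
    (show (M✶ ↾ (M.E \ {e})).E.Finite from hE'fin)
    (show X ⊆ (M✶ ↾ (M.E \ {e})).E from hX)
  simp only [restrict_ground_eq] at h1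
  have hNr : ∀ Y : Set α, Y ⊆ M.E \ {e} → (M✶ ↾ (M.E \ {e})).rankOf Y = M✶.rankOf Y := by
    intro Y hY
    rw [rankOf_restrict, inter_eq_self_of_subset_left hY]
  rw [hNr (M.E \ {e}) subset_rfl, hNr ((M.E \ {e}) \ X) diff_subset] at h1
  have haa : M.E \ (M.E \ {e}) = {e} :=
    diff_diff_cancel_left (singleton_subset_iff.mpr he)
  have ha : M✶.rankOf (M.E \ {e}) + M.rankOf M.E = (M.E \ {e}).ncard + 1 := by
    have := rankOf_dual_add (M := M) hfin (X := M.E \ {e}) diff_subset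
    rwa [haa, he1] at this
  have hb : M✶.rankOf ((M.E \ {e}) \ X) + M.rankOf M.E
      = ((M.E \ {e}) \ X).ncard + M.rankOf (X ∪ {e}) := by
    have hbb : M.E \ ((M.E \ {e}) \ X) = X ∪ {e} := by
      rw [diff_diff_right, haa, inter_eq_self_of_subset_right (hX.trans diff_subset),
        union_comm]
    have := rankOf_dual_add (M := M) hfin (X := (M.E \ {e}) \ X)
      (diff_subset.trans diff_subset)
    rwa [hbb] at this
  have hc : ((M.E \ {e}) \ X).ncard + X.ncard = (M.E \ {e}).ncard :=
    ncard_diff_add_ncard_of_subset hX hE'fin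
  have hrfl : (M.conElem e).rankOf X = ((M✶ ↾ (M.E \ {e}))✶).rankOf X := rfl
  rw [hrfl]
  omega

end Matroid

open Matroid Set

/-- **Tutte's chain theorem.** Let `e` be an element of a connected finite matroid `M`.
Then `M∖e` or `M/e` is connected. -/
theorem matroid_chain {α : Type*} (M : Matroid α) (hfin : M.E.Finite)
    (hconn : M.IsConn) (e : α) (he : e ∈ M.E) :
    (M.delElem e).IsConn ∨ (M.conElem e).IsConn := by
  classical
  by_cases hE'ne : (M.E \ {e}).Nonempty
  swap
  · left
    rintro ⟨X, hsep, hXne, -⟩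
    have hX : X ⊆ M.E \ {e} := by rw [← M.delElem_ground e]; exact hsep.1
    rw [not_nonempty_iff_eq_empty] at hE'ne
    rw [hE'ne, subset_empty_iff] at hX
    exact hXne.ne_empty hX
  have hE'sub : M.E \ {e} ⊆ M.E := diff_subset
  have heE' : e ∉ M.E \ {e} := fun h => h.2 rfl
  -- the ground set of M splits as (E \ e) plus e
  have hcompl : ∀ A : Set α, A ⊆ M.E \ {e} → M.E \ A = ((M.E \ {e}) \ A) ∪ {e} := by
    intro A hA
    have heA : e ∉ A := fun h => heE' (hA h)
    ext x
    constructor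
    · rintro ⟨hxE, hxA⟩
      by_cases hxe : x = e
      · exact Or.inr hxe
      · exact Or.inl ⟨⟨hxE, hxe⟩, hxA⟩
    · rintro (⟨⟨hxE, -⟩, hxA⟩ | hxe)
      · exact ⟨hxE, hxA⟩
      · rw [mem_singleton_iff] at hxe
        subst hxe
        exact ⟨he, heA⟩
  -- connectivity inequality
  have hconn' : ∀ A : Set α, A ⊆ M.E → A.Nonempty → A ≠ M.E →
      M.rankOf M.E + 1 ≤ M.rankOf A + M.rankOf (M.E \ A) := by
    intro A hA hAne hAne'
    have hne : M.rankOf A + M.rankOf (M.E \ A) ≠ M.rankOf M.E :=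
      fun h => hconn ⟨A, ⟨hA, h⟩, hAne, hAne'⟩
    have hsub2 := M.rankOf_submod hfin A (M.E \ A)
    rw [union_diff_cancel hA] at hsub2
    omega
  -- rank of {e} is 1, and rank of E \ e equals rank of E
  have he1 : M.rankOf {e} = 1 := by
    have hle : M.rankOf {e} ≤ 1 := by
      have := rankOf_le_ncard (M := M) (X := {e}) hfin (finite_singleton e)
      rwa [ncard_singleton] at this
    rcases Nat.le_one_iff_eq_zero_or_eq_one.mp hle with h0 | h1
    · exfalso
      have hE'neq : M.E \ {e} ≠ M.E := fun h => heE' (by rw [h]; exact he)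
      have hcc := hconn' (M.E \ {e}) hE'sub hE'ne hE'neq
      rw [diff_diff_cancel_left (singleton_subset_iff.mpr he), h0] at hcc
      have hmono := rankOf_mono (M := M) hfin hE'sub
      omega
    · exact h1
  have hE'rank : M.rankOf (M.E \ {e}) = M.rankOf M.E := by
    have hsingne : ({e} : Set α) ≠ M.E := by
      obtain ⟨x, hx⟩ := hE'ne
      intro h
      have hx' : x ∈ ({e} : Set α) := by rw [h]; exact hx.1
      exact hx.2 hx'
    have hcc := hconn' {e} (singleton_subset_iff.mpr he) (singleton_nonempty e) hsingne
    rw [he1] at hcc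
    have hmono := rankOf_mono (M := M) hfin hE'sub
    omega
  -- assume both minors disconnected
  by_contra hcon
  push_neg at hcon
  obtain ⟨hd, hc⟩ := hcon
  rw [IsConn, not_not] at hd hc
  obtain ⟨X1, hsep1, hX1ne, hX1neq⟩ := hd
  obtain ⟨X2, hsep2, hX2ne, hX2neq⟩ := hc
  have hX1sub : X1 ⊆ M.E \ {e} := by rw [← M.delElem_ground e]; exact hsep1.1
  have hX2sub : X2 ⊆ M.E \ {e} := by rw [← M.conElem_ground e]; exact hsep2.1
  have hY1ne : ((M.E \ {e}) \ X1).Nonempty := by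
    rw [diff_nonempty]
    intro h
    exact hX1neq (by rw [M.delElem_ground e]; exact hX1sub.antisymm h)
  have hY2ne : ((M.E \ {e}) \ X2).Nonempty := by
    rw [diff_nonempty]
    intro h
    exact hX2neq (by rw [M.conElem_ground e]; exact hX2sub.antisymm h)
  have hY1sub : (M.E \ {e}) \ X1 ⊆ M.E \ {e} := diff_subset
  have hY2sub : (M.E \ {e}) \ X2 ⊆ M.E \ {e} := diff_subset
  -- separation equations
  have hr1 : M.rankOf X1 + M.rankOf ((M.E \ {e}) \ X1) = M.rankOf M.E := by
    have h := hsep1.2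
    rw [M.delElem_ground e] at h
    rw [delElem_rankOf hX1sub, delElem_rankOf hY1sub, delElem_rankOf subset_rfl, hE'rank] at h
    exact h
  have hr2 : M.rankOf (X2 ∪ {e}) + M.rankOf (((M.E \ {e}) \ X2) ∪ {e})
      = M.rankOf M.E + 1 := by
    have h := hsep2.2
    rw [M.conElem_ground e] at h
    have e1 := conElem_rankOf hfin he he1 hX2sub
    have e2 := conElem_rankOf hfin he he1 hY2sub
    have e3 := conElem_rankOf (M := M) hfin he he1 (X := M.E \ {e}) subset_rfl
    have hE'e : (M.E \ {e}) ∪ {e} = M.E := by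
      rw [diff_union_self, union_eq_self_of_subset_right (singleton_subset_iff.mpr he)]
    rw [hE'e] at e3
    omega
  -- e is in the closure of both sides of the contraction separation
  have hclX2 : M.rankOf (X2 ∪ {e}) = M.rankOf X2 := by
    have hcc := hconn' X2 (hX2sub.trans hE'sub) hX2ne
      (fun h => heE' (hX2sub (by rw [h]; exact he)))
    rw [hcompl X2 hX2sub] at hcc
    have hmono := rankOf_mono (M := M) hfin (subset_union_left (s := X2) (t := {e}))
    omega
  have hclY2 : M.rankOf (((M.E \ {e}) \ X2) ∪ {e}) = M.rankOf ((M.E \ {e}) \ X2) := by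
    have hcc := hconn' ((M.E \ {e}) \ X2) (hY2sub.trans hE'sub) hY2ne
      (fun h => heE' (hY2sub (by rw [h]; exact he)))
    rw [hcompl _ hY2sub, diff_diff_cancel_left hX2sub] at hcc
    have hmono := rankOf_mono (M := M) hfin
      (subset_union_left (s := (M.E \ {e}) \ X2) (t := {e}))
    -- hcc : rE + 1 ≤ r(Y2) + r(X2 ∪ {e}), hr2, hclX2
    omega
  have hr2' : M.rankOf X2 + M.rankOf ((M.E \ {e}) \ X2) = M.rankOf M.E + 1 := by
    rw [← hclX2, ← hclY2]; exact hr2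
  -- lower bound for the connectivity function of the deletion
  have glower : ∀ A : Set α, A ⊆ M.E \ {e} →
      M.rankOf M.E ≤ M.rankOf A + M.rankOf ((M.E \ {e}) \ A) := by
    intro A hA
    have hs := M.rankOf_submod hfin A ((M.E \ {e}) \ A)
    rw [union_diff_cancel hA, hE'rank] at hs
    omega
  -- key helper
  have H : ∀ A C : Set α, A ⊆ M.E \ {e} → A.Nonempty → C ⊆ (M.E \ {e}) \ A →
      M.rankOf (C ∪ {e}) = M.rankOf C →
      M.rankOf A + M.rankOf ((M.E \ {e}) \ A) ≤ M.rankOf M.E → False := by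
    intro A C hA hAne hC hCcl hle
    have hAneq : A ≠ M.E := fun h => heE' (hA (by rw [h]; exact he))
    have h1 := hconn' A (hA.trans hE'sub) hAne hAneq
    rw [hcompl A hA] at h1
    have h2 : M.rankOf (((M.E \ {e}) \ A) ∪ {e}) ≤ M.rankOf ((M.E \ {e}) \ A) := by
      have hs := M.rankOf_submod hfin ((M.E \ {e}) \ A) (C ∪ {e})
      have hu : ((M.E \ {e}) \ A) ∪ (C ∪ {e}) = ((M.E \ {e}) \ A) ∪ {e} := by
        rw [← union_assoc, union_eq_self_of_subset_right hC]
      have hi : ((M.E \ {e}) \ A) ∩ (C ∪ {e}) = C := by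
        rw [inter_union_distrib_left, inter_eq_self_of_subset_right hC,
          inter_singleton_eq_empty.mpr (fun h => heE' (diff_subset h)), union_empty]
      rw [hu, hi, hCcl] at hs
      omega
    omega
  -- the crossing argument
  have pair : ∀ X2' Y2' : Set α, X2' ⊆ M.E \ {e} → Y2' = (M.E \ {e}) \ X2' →
      M.rankOf (X2' ∪ {e}) = M.rankOf X2' → M.rankOf (Y2' ∪ {e}) = M.rankOf Y2' →
      M.rankOf X2' + M.rankOf Y2' = M.rankOf M.E + 1 →
      X1 ∩ X2' = ∅ ∨ ((M.E \ {e}) \ X1) ∩ Y2' = ∅ := by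
    intro X2' Y2' hX2' hY2' hcl2 hcl2' hrr
    by_contra hne
    push_neg at hne
    obtain ⟨h1ne, h2ne⟩ := hne
    have s1 := M.rankOf_submod hfin X1 X2'
    have s2 := M.rankOf_submod hfin ((M.E \ {e}) \ X1) Y2'
    have hid1 : (M.E \ {e}) \ (X1 ∩ X2') = ((M.E \ {e}) \ X1) ∪ Y2' := by
      rw [hY2', ← diff_inter]
    have hid2 : (M.E \ {e}) \ (((M.E \ {e}) \ X1) ∩ Y2') = X1 ∪ X2' := by
      rw [hY2', diff_inter_diff, diff_diff_cancel_left (union_subset hX1sub hX2')]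
    have g1 := glower (X1 ∩ X2') (inter_subset_left.trans hX1sub)
    have g2 := glower (((M.E \ {e}) \ X1) ∩ Y2') (inter_subset_left.trans hY1sub)
    rw [hid1] at g1
    rw [hid2] at g2
    have hcase : M.rankOf (X1 ∩ X2') + M.rankOf (((M.E \ {e}) \ X1) ∪ Y2') ≤ M.rankOf M.E ∨
        M.rankOf ((((M.E \ {e}) \ X1)) ∩ Y2') + M.rankOf (X1 ∪ X2') ≤ M.rankOf M.E := by
      omega
    rcases hcase with hcas | hcas
    · exact H (X1 ∩ X2') Y2' (inter_subset_left.trans hX1sub) h1ne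
        (by rw [hid1]; exact subset_union_right) hcl2'
        (by rw [hid1]; exact hcas)
    · exact H (((M.E \ {e}) \ X1) ∩ Y2') X2' (inter_subset_left.trans hY1sub) h2ne
        (by rw [hid2]; exact subset_union_right) hcl2
        (by rw [hid2]; exact hcas)
  -- apply the crossing argument to both separations
  have pc1 := pair X2 ((M.E \ {e}) \ X2) hX2sub rfl hclX2 hclY2 hr2'
  have pc2 := pair ((M.E \ {e}) \ X2) X2 hY2sub (diff_diff_cancel_left hX2sub).symm
    hclY2 hclX2 (by omega)
  have hsplit : ∀ A B C : Set α, C ⊆ A ∪ B → C ∩ A = ∅ → C ∩ B = ∅ → C = ∅ := by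
    intro A B C hsub hA hB
    have hCC : C = C ∩ (A ∪ B) := (inter_eq_self_of_subset_left hsub).symm
    rw [hCC, inter_union_distrib_left, hA, hB, union_empty]
  have hE'X2 : M.E \ {e} = X2 ∪ ((M.E \ {e}) \ X2) := (union_diff_cancel hX2sub).symm
  have hE'X1 : M.E \ {e} = X1 ∪ ((M.E \ {e}) \ X1) := (union_diff_cancel hX1sub).symm
  rcases pc1 with h | h <;> rcases pc2 with h' | h'
  · exact hX1ne.ne_empty (hsplit X2 ((M.E \ {e}) \ X2) X1 (hE'X2 ▸ hX1sub) h h')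
  · exact hX2ne.ne_empty (hsplit X1 ((M.E \ {e}) \ X1) X2 (hE'X1 ▸ hX2sub)
      (by rw [inter_comm]; exact h) (by rw [inter_comm]; exact h'))
  · exact hY2ne.ne_empty (hsplit X1 ((M.E \ {e}) \ X1) ((M.E \ {e}) \ X2)
      (hE'X1 ▸ hY2sub) (by rw [inter_comm]; exact h') (by rw [inter_comm]; exact h))
  · exact hY1ne.ne_empty (hsplit X2 ((M.E \ {e}) \ X2) ((M.E \ {e}) \ X1)
      (hE'X2 ▸ hY1sub) h' h)
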